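/- For every n ≥ 2, the kernel of W_n* is infinite dimensional. Specifically, the functions f_k(z) = z^{nk} + z^{nk+1} + ... + z^{nk+n-2} − (n−1) z^{nk+n-1}, for k ≥ 0, form an orthogonal family of nonzero vectors in ker(W_n*). -/

import Mathlib

open scoped InnerProductSpace
open Filter ContinuousLinearMap

noncomputable section

/-- The Hardy space `H²` identified with `ℓ²(ℕ)` via Maclaurin coefficients. -/
abbrev H2 := lp (fun _ : ℕ => ℂ) 2

/-- `W` is the weighted composition operator `W_n f(z) = (1+z+⋯+z^{n-1}) f(z^n)`,
expressed in Maclaurin coefficients: `(W_n f)^(nk+j) = f^(k)` for `0 ≤ j ≤ n-1`. -/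
def IsWn (n : ℕ) (W : H2 →L[ℂ] H2) : Prop :=
  ∀ (f : H2) (k j : ℕ), j < n → (W f) (n * k + j) = f k

/-- `f_k(z) = z^{nk} + ⋯ + z^{nk+n-2} - (n-1) z^{nk+n-1}` as an element of `ℓ²`. -/
def fvec (n k : ℕ) : H2 :=
  (∑ j ∈ Finset.range (n - 1), lp.single 2 (n * k + j) (1 : ℂ))
    - ((n : ℂ) - 1) • lp.single 2 (n * k + (n - 1)) (1 : ℂ)

lemma inner_fvec (n k : ℕ) (g : H2) :
    ⟪fvec n k, g⟫_ℂ =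
      (∑ j ∈ Finset.range (n - 1), g (n * k + j)) - ((n : ℂ) - 1) * g (n * k + (n - 1)) := by
  simp [fvec, inner_sub_left, sum_inner, inner_smul_left, lp.inner_single_left,
    RCLike.inner_apply, mul_comm]

lemma index_ne {n k l j j' : ℕ} (hj : j < n) (hj' : j' < n) (hkl : k ≠ l) :
    n * k + j ≠ n * l + j' := by
  intro h
  have hn0 : 0 < n := lt_of_le_of_lt (Nat.zero_le _) hj
  have h1 : (n * k + j) / n = k := by
    rw [Nat.mul_add_div hn0, Nat.div_eq_of_lt hj, add_zero]
  have h2 : (n * l + j') / n = l := by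
    rw [Nat.mul_add_div hn0, Nat.div_eq_of_lt hj', add_zero]
  exact hkl (by rw [← h1, h, h2])

lemma fvec_apply_ne (n k l j : ℕ) (hj : j < n) (hkl : k ≠ l) :
    (fvec n l) (n * k + j) = 0 := by
  have hn0 : 0 < n := lt_of_le_of_lt (Nat.zero_le _) hj
  simp only [fvec, lp.coeFn_sub, lp.coeFn_smul, Pi.sub_apply, Pi.smul_apply, lp.coeFn_sum,
    Finset.sum_apply]
  rw [Finset.sum_eq_zero, lp.single_apply_ne, smul_zero, sub_zero]
  · exact index_ne hj (Nat.sub_lt hn0 one_pos) hkl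
  · intro j' hj'
    exact lp.single_apply_ne _ _ _
      (index_ne hj (lt_of_lt_of_le (Finset.mem_range.mp hj') (Nat.sub_le n 1)) hkl)

/-- For `n ≥ 2` the kernel of `W_n*` is infinite dimensional; specifically the `f_k`
form an orthogonal family of nonzero vectors in `ker W_n*`. -/
theorem ker_adjoint_infinite (n : ℕ) (hn : 2 ≤ n) (W : H2 →L[ℂ] H2) (hW : IsWn n W) :
    ¬ FiniteDimensional ℂ (LinearMap.ker (ContinuousLinearMap.adjoint W : H2 →ₗ[ℂ] H2)) ∧
    (∀ k : ℕ, fvec n k ∈ LinearMap.ker (ContinuousLinearMap.adjoint W : H2 →ₗ[ℂ] H2)) ∧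
    (∀ k : ℕ, fvec n k ≠ 0) ∧
    (∀ k l : ℕ, k ≠ l → ⟪fvec n k, fvec n l⟫_ℂ = 0) := by
  have hn1 : 1 ≤ n := le_trans one_le_two hn
  -- membership in the kernel
  have hmem : ∀ k : ℕ, fvec n k ∈ LinearMap.ker (ContinuousLinearMap.adjoint W : H2 →ₗ[ℂ] H2) := by
    intro k
    have hzero : ∀ g : H2, ⟪fvec n k, W g⟫_ℂ = 0 := by
      intro g
      rw [inner_fvec]
      have h1 : ∀ j ∈ Finset.range (n - 1), (W g) (n * k + j) = g k := by
        intro j hj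
        exact hW g k j (lt_of_lt_of_le (Finset.mem_range.mp hj) (Nat.sub_le n 1))
      rw [Finset.sum_congr rfl h1, hW g k (n - 1) (Nat.sub_lt (lt_of_lt_of_le two_pos hn) one_pos),
        Finset.sum_const, Finset.card_range, nsmul_eq_mul]
      have : ((n - 1 : ℕ) : ℂ) = (n : ℂ) - 1 := by
        push_cast [Nat.cast_sub hn1]; ring
      rw [this]; ring
    rw [LinearMap.mem_ker]
    have : ⟪ContinuousLinearMap.adjoint W (fvec n k),
        ContinuousLinearMap.adjoint W (fvec n k)⟫_ℂ = 0 := by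
      rw [ContinuousLinearMap.adjoint_inner_left]
      exact hzero _
    exact inner_self_eq_zero.mp this
  -- nonzero
  have hne : ∀ k : ℕ, fvec n k ≠ 0 := by
    intro k h
    have := congr_fun (congr_arg (fun f : H2 => (f : ℕ → ℂ)) h) (n * k + (n - 1))
    simp only [fvec, lp.coeFn_sub, lp.coeFn_smul, Pi.sub_apply, Pi.smul_apply, lp.coeFn_sum,
      Finset.sum_apply, lp.coeFn_zero, Pi.zero_apply] at this
    rw [Finset.sum_eq_zero, lp.single_apply_self, smul_eq_mul, mul_one, zero_sub,
      neg_eq_zero, sub_eq_zero] at this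
    · have : (n : ℂ) = 1 := this
      have : n = 1 := by exact_mod_cast this
      omega
    · intro j hj
      exact lp.single_apply_ne _ _ _
        (by have := Finset.mem_range.mp hj; omega : n * k + (n - 1) ≠ n * k + j)
  -- orthogonality
  have horth : ∀ k l : ℕ, k ≠ l → ⟪fvec n k, fvec n l⟫_ℂ = 0 := by
    intro k l hkl
    rw [inner_fvec, Finset.sum_eq_zero, fvec_apply_ne n k l (n - 1)
      (Nat.sub_lt (lt_of_lt_of_le two_pos hn) one_pos) hkl, mul_zero, sub_zero]
    intro j hj
    exact fvec_apply_ne n k l j (lt_of_lt_of_le (Finset.mem_range.mp hj) (Nat.sub_le n 1)) hkl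
  refine ⟨?_, hmem, hne, horth⟩
  intro hfin
  set K := LinearMap.ker (ContinuousLinearMap.adjoint W : H2 →ₗ[ℂ] H2)
  have hli : LinearIndependent ℂ (fun k : ℕ => (⟨fvec n k, hmem k⟩ : K)) := by
    apply linearIndependent_of_ne_zero_of_inner_eq_zero
    · intro k h
      exact hne k (congr_arg Subtype.val h)
    · intro k l hkl
      exact horth k l hkl
  exact Module.Finite.not_linearIndependent_of_infinite _ hli
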